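/- arXiv:2412.01974 — 2 statements merged into one kernel-verified Lean document; each statement's English description precedes it below -/
import Mathlib

section
/- Let φ be a substitution of constant length k. For biinfinite sequences x, y and m ≥ 1, one has φ^m(x) = φ^m(y) if and only if Θ(x) = Θ(y) for every map Θ in F_{φ,m}. -/
/-- The extension of a substitution `φ : A → A*` to finite words, by concatenation. -/
def substWord {A : Type*} (φ : A → List A) (w : List A) : List A := w.flatMap φ

/-- The extension of a substitution of constant length `k` to biinfinite sequences:
position `0` of the image is the start of `φ(x 0)`. -/
def substZ {A : Type*} [Inhabited A] (φ : A → List A) (k : ℕ) (x : ℤ → A) : ℤ → A :=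
  fun n => (φ (x (Int.fdiv n (k : ℤ)))).getD (Int.fmod n (k : ℤ)).toNat default

/-- The shift `T^c` on biinfinite sequences (`T` is the left shift). -/
def shiftZ {A : Type*} (c : ℤ) (x : ℤ → A) : ℤ → A := fun n => x (n + c)

/-- The composition `Ψ_{i_{m-1}} ∘ ⋯ ∘ Ψ_{i_0}` of the column maps of a substitution of
constant length `k`, where `Ψ_i` sends a letter `a` to the `i`-th letter of `φ(a)`. -/
def psiWord {A : Type*} [Inhabited A] (φ : A → List A) {m k : ℕ} (i : Fin m → Fin k) : A → A :=
  fun a => (List.ofFn i).foldl (fun b j => (φ b).getD (j : ℕ) default) a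

/-- The `k`-kernel of a biinfinite sequence `x`: the set of subsequences
`n ↦ x (k^m * n + j)` for `m ≥ 0` and `0 ≤ j < k^m`. -/
def kernelK {A : Type*} (k : ℕ) (x : ℤ → A) : Set (ℤ → A) :=
  {y | ∃ (m j : ℕ), j < k ^ m ∧ y = fun n => x ((k : ℤ) ^ m * n + (j : ℤ))}

/-- Peeling off the first column map from `psiWord`. -/
lemma psiWord_succ {A : Type*} [Inhabited A] (φ : A → List A) {m k : ℕ}
    (i : Fin (m+1) → Fin k) (a : A) :
    psiWord φ i a = psiWord φ (fun j => i j.succ) ((φ a).getD (i 0 : ℕ) default) := by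
  simp [psiWord, List.ofFn_succ]

/-- The value of `substZ φ k x` at position `k * n + r` is the `r`-th letter of `φ (x n)`. -/
lemma substZ_mul_add {A : Type*} [Inhabited A] (φ : A → List A) {k : ℕ} (hk : 0 < k)
    (x : ℤ → A) (n : ℤ) (r : Fin k) :
    substZ φ k x ((k : ℤ) * n + (r : ℕ)) = (φ (x n)).getD (r : ℕ) default := by
  have hk' : (0:ℤ) < (k:ℤ) := by exact_mod_cast hk
  have hd : Int.fdiv ((k : ℤ) * n + (r : ℕ)) (k : ℤ) = n := by
    rw [Int.fdiv_eq_ediv_of_nonneg _ hk'.le, add_comm, Int.add_mul_ediv_left _ _ hk'.ne',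
      Int.ediv_eq_zero_of_lt (by positivity) (by exact_mod_cast r.isLt), zero_add]
  have hmo : Int.fmod ((k : ℤ) * n + (r : ℕ)) (k : ℤ) = (r : ℕ) := by
    rw [Int.fmod_eq_emod_of_nonneg _ hk'.le, add_comm, Int.add_mul_emod_self_left,
      Int.emod_eq_of_lt (by positivity) (by exact_mod_cast r.isLt)]
  rw [substZ, hd, hmo, Int.toNat_natCast]

/-- The equivalence, pointwise and for all `m ≥ 0`. -/
lemma subst_pow_eq_iff_psi_eq_aux {A : Type*} [Inhabited A] (φ : A → List A) (k : ℕ)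
    (hk : 0 < k) (x y : ℤ → A) (m : ℕ) :
    (substZ φ k)^[m] x = (substZ φ k)^[m] y ↔
      ∀ i : Fin m → Fin k, ∀ n, psiWord φ i (x n) = psiWord φ i (y n) := by
  induction m generalizing x y with
  | zero =>
    simp only [Function.iterate_zero, id]
    constructor
    · rintro rfl i n; rfl
    · intro h; funext n
      have := h (fun j => j.elim0) n
      simpa [psiWord] using this
  | succ m ih =>
    rw [Function.iterate_succ_apply, Function.iterate_succ_apply, ih]
    constructor
    · intro h i n
      set r : Fin k := i 0
      have h' := h (fun j => i j.succ) ((k:ℤ) * n + (r : ℕ))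
      rw [substZ_mul_add φ hk, substZ_mul_add φ hk] at h'
      rw [psiWord_succ, psiWord_succ]
      exact h'
    · intro h i n
      have hk' : (0:ℤ) < (k:ℤ) := by exact_mod_cast hk
      have hr : (Int.fmod n (k:ℤ)).toNat < k := by
        have h1 := Int.fmod_lt_of_pos n hk'
        omega
      have h' := h (Fin.cons ⟨_, hr⟩ i) (Int.fdiv n (k:ℤ))
      rw [psiWord_succ, psiWord_succ] at h'
      simpa [substZ, Fin.cons] using h'

/-- For a substitution `φ` of constant length `k`, biinfinite sequences `x, y`, and
`m ≥ 1`: `φ^m(x) = φ^m(y)` if and only if `Θ(x) = Θ(y)` for every map `Θ ∈ F_{φ,m}`,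
i.e. for every composition `Ψ_{i_{m-1}} ∘ ⋯ ∘ Ψ_{i_0}` applied coordinatewise. -/
theorem subst_pow_eq_iff_psi_eq {A : Type*} [Inhabited A] (φ : A → List A) (k : ℕ)
    (hk : 0 < k) (hlen : ∀ a, (φ a).length = k) (x y : ℤ → A) (m : ℕ) (hm : 1 ≤ m) :
    (substZ φ k)^[m] x = (substZ φ k)^[m] y ↔
      ∀ i : Fin m → Fin k, (fun n => psiWord φ i (x n)) = fun n => psiWord φ i (y n) := by
  rw [subst_pow_eq_iff_psi_eq_aux φ k hk x y m]
  simp only [funext_iff]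
end

section
/- Every biinfinite quasi-fixed point of a constant-length-k substitution φ (k ≥ 2) is k-automatic. -/
private theorem my_ediv_ediv (a : ℤ) {b c : ℤ} (hb : 0 < b) (hc : 0 < c) :
    a / b / c = a / (b * c) := by
  have h1 : a = a % (b*c) + (a/(b*c) * c) * b := by
    have := Int.emod_add_mul_ediv a (b*c); linarith [this, mul_comm (b*c) (a/(b*c))]
  have hr0 : 0 ≤ a % (b*c) := Int.emod_nonneg a (by positivity)
  have hr1 : a % (b*c) < b * c := Int.emod_lt_of_pos a (by positivity)
  have h2 : a / b = a % (b*c) / b + a/(b*c) * c := by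
    conv_lhs => rw [h1]
    exact Int.add_mul_ediv_right _ _ hb.ne'
  have hq0 : 0 ≤ a % (b*c) / b := Int.ediv_nonneg hr0 hb.le
  have hq1 : a % (b*c) / b < c := (Int.ediv_lt_iff_lt_mul hb).mpr (by linarith [mul_comm b c])
  rw [h2, Int.add_mul_ediv_right _ _ hc.ne', Int.ediv_eq_zero_of_lt hq0 hq1, zero_add]

private theorem my_emod_ediv_emod (a : ℤ) {b c : ℤ} (hb : 0 < b) (hc : 0 < c) :
    a % (b * c) / b % c = a / b % c := by
  have h1 : a = a % (b*c) + (a/(b*c) * c) * b := by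
    have := Int.emod_add_mul_ediv a (b*c); linarith [this, mul_comm (b*c) (a/(b*c))]
  have h2 : a / b = a % (b*c) / b + a/(b*c) * c := by
    conv_lhs => rw [h1]
    exact Int.add_mul_ediv_right _ _ hb.ne'
  rw [h2, Int.add_mul_emod_self_right]

private theorem substZ_apply {A : Type*} [Inhabited A] (φ : A → List A) {k : ℕ} (hk : 0 < k)
    (x : ℤ → A) (n : ℤ) :
    substZ φ k x n = (φ (x (n / (k : ℤ)))).getD ((n % (k : ℤ)).toNat) default := by
  unfold substZ
  rw [Int.fdiv_eq_ediv_of_nonneg _ (by exact_mod_cast hk.le), Int.fmod_eq_emod_of_nonneg _ (by exact_mod_cast hk.le)]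

/-- pointwise formula for iterates of `substZ` via abstract column maps -/
private theorem iter_formula {A : Type*} [Inhabited A] (φ : A → List A) {k : ℕ} (hk : 0 < k)
    (M : ℕ) :
    ∃ G : ℤ → A → A, ∀ (x : ℤ → A) (n : ℤ),
      (substZ φ k)^[M] x n = G (n % (k : ℤ) ^ M) (x (n / (k : ℤ) ^ M)) := by
  have hkZ : (0 : ℤ) < (k : ℤ) := by exact_mod_cast hk
  induction M with
  | zero =>
    exact ⟨fun _ a => a, fun x n => by simp⟩
  | succ M ih =>
    obtain ⟨G, hG⟩ := ih
    have hb : (0 : ℤ) < (k : ℤ) ^ M := by positivity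
    refine ⟨fun r a => G (r % (k : ℤ) ^ M)
      ((φ a).getD ((r / (k : ℤ) ^ M % (k : ℤ)).toNat) default), fun x n => ?_⟩
    rw [Function.iterate_succ_apply, hG, substZ_apply φ hk]
    have e1 : n / (k : ℤ) ^ M / (k : ℤ) = n / (k : ℤ) ^ (M + 1) := by
      rw [my_ediv_ediv n hb hkZ, ← pow_succ]
    have e2 : n % (k : ℤ) ^ (M + 1) % (k : ℤ) ^ M = n % (k : ℤ) ^ M := by
      apply Int.emod_emod_of_dvd
      exact pow_dvd_pow _ (Nat.le_succ M)
    have e3 : n % (k : ℤ) ^ (M + 1) / (k : ℤ) ^ M % (k : ℤ) = n / (k : ℤ) ^ M % (k : ℤ) := by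
      rw [pow_succ]
      exact my_emod_ediv_emod n hb hkZ
    rw [e1]
    simp only [e2, e3]

/-- Every biinfinite quasi-fixed point of a substitution `φ` of constant length `k ≥ 2`
on a finite alphabet is `k`-automatic: its `k`-kernel is finite. -/
theorem quasiFixed_is_automatic {A : Type*} [Inhabited A] [Fintype A]
    (φ : A → List A) (k : ℕ) (hk : 2 ≤ k) (hlen : ∀ a, (φ a).length = k)
    (z : ℤ → A) (hz : ∃ (m : ℕ) (c : ℤ), 1 ≤ m ∧ shiftZ c ((substZ φ k)^[m] z) = z) :
    (kernelK k z).Finite := by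
  obtain ⟨M, c, hM, hz⟩ := hz
  have hkpos : 0 < k := by omega
  have hkZ : (2 : ℤ) ≤ (k : ℤ) := by exact_mod_cast hk
  set K : ℤ := (k : ℤ) ^ M with hKdef
  have hK2 : (2 : ℤ) ≤ K := le_trans hkZ (le_self_pow₀ (by linarith) (by omega))
  have hKpos : (0 : ℤ) < K := by linarith
  set B : ℤ := |c| + 1 with hBdef
  have hB1 : (1 : ℤ) ≤ B := by have := abs_nonneg c; omega
  have hBK : B + |c| ≤ B * K := by nlinarith [abs_nonneg c]
  obtain ⟨G, hG⟩ := iter_formula φ hkpos M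
  have key : ∀ N : ℤ, z N = G ((N + c) % K) (z ((N + c) / K)) := by
    intro N
    conv_lhs => rw [← hz]
    exact hG z (N + c)
  -- the main claim, by strong induction
  have Q : ∀ m : ℕ, ∀ j : ℤ, -B ≤ j → j < (k : ℤ) ^ m + B →
      ∃ (g : A → A) (r : ℕ) (d : ℤ), r < M ∧ -B ≤ d ∧ d < K + B ∧
        ∀ n : ℤ, z ((k : ℤ) ^ m * n + j) = g (z ((k : ℤ) ^ r * n + d)) := by
    intro m
    induction m using Nat.strong_induction_on with
    | _ m ih =>
      intro j hj1 hj2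
      by_cases hm : m < M
      · refine ⟨id, m, j, hm, hj1, ?_, fun n => rfl⟩
        have : (k : ℤ) ^ m ≤ K := pow_le_pow_right₀ (by linarith) hm.le
        linarith
      · push_neg at hm
        set m' := m - M with hm'def
        have hmm : m = m' + M := by omega
        have hpow : (k : ℤ) ^ m = (k : ℤ) ^ m' * K := by
          rw [hKdef, ← pow_add, ← hmm]
        set j' : ℤ := (j + c) / K with hj'def
        have habs1 : -|c| ≤ c := neg_abs_le c
        have habs2 : c ≤ |c| := le_abs_self c
        have hj'1 : -B ≤ j' := by
          rw [hj'def]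
          rw [Int.le_ediv_iff_mul_le hKpos]
          nlinarith
        have hj'2 : j' < (k : ℤ) ^ m' + B := by
          rw [hj'def]
          rw [Int.ediv_lt_iff_lt_mul hKpos]
          have hkm' : (0:ℤ) < (k : ℤ) ^ m' := by positivity
          nlinarith
        obtain ⟨g, r, d, hr, hd1, hd2, hgd⟩ := ih m' (by omega) j' hj'1 hj'2
        refine ⟨fun a => G ((j + c) % K) (g a), r, d, hr, hd1, hd2, fun n => ?_⟩
        have harg : (k : ℤ) ^ m * n + j + c = (j + c) + K * ((k : ℤ) ^ m' * n) := by
          rw [hpow]; ring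
        have h1 := key ((k : ℤ) ^ m * n + j)
        rw [harg, Int.add_mul_emod_self_left, Int.add_mul_ediv_left _ _ hKpos.ne'] at h1
        rw [h1, ← hj'def, add_comm j' ((k : ℤ) ^ m' * n), hgd n]
  -- conclude finiteness
  haveI : Finite (Set.Icc (-B) (K + B)) := (Set.finite_Icc (-B) (K + B)).to_subtype
  have hM0 : 0 < M := hM
  set F : (A → A) × Fin M × (Set.Icc (-B) (K + B)) → (ℤ → A) :=
    fun p => fun n => p.1 (z ((k : ℤ) ^ (p.2.1 : ℕ) * n + (p.2.2 : ℤ))) with hF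
  apply Set.Finite.subset (Set.finite_range F)
  rintro y ⟨m, j, hjlt, rfl⟩
  have hj1 : -B ≤ (j : ℤ) := by have : (0:ℤ) ≤ j := Int.ofNat_nonneg j; omega
  have hj2 : (j : ℤ) < (k : ℤ) ^ m + B := by
    have : (j : ℤ) < (k : ℤ) ^ m := by exact_mod_cast hjlt
    omega
  obtain ⟨g, r, d, hr, hd1, hd2, hgd⟩ := Q m j hj1 hj2
  exact ⟨(g, ⟨r, hr⟩, ⟨d, hd1, hd2.le⟩), (funext fun n => (hgd n).symm)⟩
end
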